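/- The fundamental matrix Q = (Id - M + h 1^T)^{-1} is a generalized inverse of Id - M, i.e., (Id - M) Q (Id - M) = Id - M. -/
import Mathlib


open Matrix BigOperators

/-- The fundamental matrix `Q = (Id - M + h 1ᵀ)⁻¹` is a generalized inverse of
`Id - M`: one has `(Id - M) Q (Id - M) = Id - M`. -/
theorem stmt_2 {n : ℕ} (M : Matrix (Fin n) (Fin n) ℝ)
    (hM0 : ∀ i j, 0 ≤ M i j) (hMcol : ∀ j, ∑ i, M i j = 1)
    (hprim : ∃ N : ℕ, ∀ i j, 0 < (M ^ N) i j)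
    (h : Fin n → ℝ) (hh0 : ∀ i, 0 ≤ h i) (hhsum : ∑ i, h i = 1)
    (hstat : M.mulVec h = h)
    (hinv : IsUnit (1 - M + vecMulVec h (fun _ => (1 : ℝ)))) :
    (1 - M) * (1 - M + vecMulVec h (fun _ => (1 : ℝ)))⁻¹ * (1 - M) = 1 - M := by
  set P : Matrix (Fin n) (Fin n) ℝ := vecMulVec h (fun _ => (1 : ℝ)) with hP
  set A : Matrix (Fin n) (Fin n) ℝ := 1 - M + P with hA
  have hdet : IsUnit A.det := (Matrix.isUnit_iff_isUnit_det A).mp hinv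
  have hAinv : A⁻¹ * A = 1 := Matrix.nonsing_inv_mul A hdet
  have hAinv' : A * A⁻¹ = 1 := Matrix.mul_nonsing_inv A hdet
  -- (1 - M) * P = 0
  have h1 : (1 - M) * P = 0 := by
    ext i j
    have := congrFun hstat i
    simp only [Matrix.mulVec, dotProduct] at this
    simp [hP, Matrix.mul_apply, Matrix.vecMulVec_apply, Matrix.sub_apply,
      Matrix.one_apply, sub_mul, Finset.sum_sub_distrib, ite_mul,
      Finset.sum_ite_eq, this]
  -- P * (1 - M) = 0
  have h2 : P * (1 - M) = 0 := by
    ext i j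
    simp only [hP, Matrix.mul_apply, Matrix.vecMulVec_apply, Matrix.sub_apply,
      Matrix.one_apply, Matrix.zero_apply]
    have : ∑ k, h i * 1 * ((if k = j then (1:ℝ) else 0) - M k j)
        = h i * (∑ k, ((if k = j then (1:ℝ) else 0) - M k j)) := by
      rw [Finset.mul_sum]; simp
    rw [this, Finset.sum_sub_distrib, Finset.sum_ite_eq', hMcol]
    simp
  -- P * P = P
  have h3 : P * P = P := by
    ext i j
    simp only [hP, Matrix.mul_apply, Matrix.vecMulVec_apply]
    rw [show ∑ k, h i * 1 * (h k * 1) = h i * ∑ k, h k by rw [Finset.mul_sum]; ring_nf,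
      hhsum, mul_one]
  -- A * P = P, hence A⁻¹ * P = P
  have h4 : A * P = P := by
    rw [hA, add_mul, h1, zero_add, h3]
  have h5 : A⁻¹ * P = P := by
    calc A⁻¹ * P = A⁻¹ * (A * P) := by rw [h4]
    _ = (A⁻¹ * A) * P := by rw [Matrix.mul_assoc]
    _ = P := by rw [hAinv, Matrix.one_mul]
  -- main computation: 1 - M = A - P
  have hPA : P * A = P := by
    rw [hA, Matrix.mul_add, h2, zero_add, h3]
  have h5' : P * A⁻¹ = P := by
    calc P * A⁻¹ = (P * A) * A⁻¹ := by rw [hPA]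
    _ = P * (A * A⁻¹) := by rw [Matrix.mul_assoc]
    _ = P := by rw [hAinv', Matrix.mul_one]
  have h6 : (1 : Matrix (Fin n) (Fin n) ℝ) - M = A - P := by rw [hA]; abel
  rw [h6, Matrix.sub_mul, hAinv', h5', Matrix.sub_mul, Matrix.one_mul,
    Matrix.mul_sub, hPA, h3, sub_self, sub_zero]
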